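/- For letters c ∈ Σ \ {b} and words w over the alphabet indexed by Σ not ending in x_b, the multiple polylogarithm satisfies the differential relation d/dz Li_b(x_c w; z) = (1/(z−c)) · Li_b(w; z) on the disc |z−b| < min_{c'≠b} |c'−b| minus the point c (in particular for z in that disc with z ≠ c). -/

import Mathlib

open Finset

namespace PolyLiAux

abbrev Chains (s : ℕ) := {f : Fin s → ℕ // StrictAnti f ∧ ∀ i, 0 < f i}

/-- the "next value" in a chain, with the convention that it is `0` past the end. -/
def nxt (s : ℕ) (m : Fin s → ℕ) (i : Fin s) : ℕ :=
  if h : (i : ℕ) + 1 < s then m ⟨(i : ℕ) + 1, h⟩ else 0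

def gap (s : ℕ) (m : Fin s → ℕ) (i : Fin s) : ℕ := m i - nxt s m i

def topv (s : ℕ) (m : Fin s → ℕ) : ℕ := if h : 0 < s then m ⟨0, h⟩ else 0

lemma nxt_succ (s : ℕ) (m : Fin (s + 1) → ℕ) (i : Fin s) :
    nxt (s + 1) m i.succ = nxt s (m ∘ Fin.succ) i := by
  unfold nxt
  by_cases h : (i : ℕ) + 1 < s
  · rw [dif_pos h, dif_pos (by simpa using Nat.succ_lt_succ h)]
    have : (⟨(i.succ : ℕ) + 1, by simpa using Nat.succ_lt_succ h⟩ : Fin (s + 1)) =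
        Fin.succ ⟨(i : ℕ) + 1, h⟩ := by
      simp [Fin.ext_iff]
    simp [this]
  · rw [dif_neg h, dif_neg (by simpa using fun hh => h (Nat.lt_of_succ_lt_succ hh))]

lemma nxt_le_of_strictAnti {s : ℕ} {m : Fin s → ℕ} (hm : StrictAnti m) (i : Fin s) :
    nxt s m i ≤ m i := by
  unfold nxt
  by_cases h : (i : ℕ) + 1 < s
  · rw [dif_pos h]
    exact (hm (show i < ⟨(i : ℕ) + 1, h⟩ by simp [Fin.lt_def])).le
  · rw [dif_neg h]; exact Nat.zero_le _

lemma sum_gap (s : ℕ) (m : Fin s → ℕ) (hm : ∀ i, nxt s m i ≤ m i) :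
    ∑ i, gap s m i = topv s m := by
  induction s with
  | zero => simp [topv]
  | succ s ih =>
    have hg : ∀ i : Fin s, gap (s + 1) m i.succ = gap s (m ∘ Fin.succ) i := by
      intro i
      unfold gap
      rw [nxt_succ]
      rfl
    rw [Fin.sum_univ_succ]
    rw [Finset.sum_congr rfl (fun i _ => hg i)]
    rw [ih (m ∘ Fin.succ) (fun i => by rw [← nxt_succ]; exact hm i.succ)]
    have h0 : gap (s + 1) m 0 = m 0 - nxt (s + 1) m 0 := rfl
    rcases Nat.eq_zero_or_pos s with hs | hs
    · subst hs
      have : nxt 1 m 0 = 0 := by unfold nxt; rw [dif_neg (by omega)]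
      simp [topv, gap, this, Fin.ext_iff]
    · have h1 : nxt (s + 1) m 0 = topv s (m ∘ Fin.succ) := by
        unfold nxt topv
        rw [dif_pos (show ((0 : Fin (s + 1)) : ℕ) + 1 < s + 1 from by rw [Fin.val_zero]; omega), dif_pos hs]
        simp only [Function.comp_apply]
        exact congrArg m (Fin.ext (by simp))
      have h2 : nxt (s + 1) m 0 ≤ m 0 := hm 0
      have h3 : topv (s + 1) m = m 0 := by
        unfold topv
        rw [dif_pos (by omega : 0 < s + 1)]
        exact congrArg m (Fin.ext (by simp))
      rw [h3, h0, h1]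
      rw [h1] at h2
      omega

noncomputable def G (b : ℂ) (s : ℕ) (k : Fin s → ℕ) (c : Fin s → ℂ) (m : Fin s → ℕ) : ℂ :=
  ∏ i, ((c i - b)⁻¹) ^ gap s m i / ((m i : ℂ)) ^ k i

lemma term_eq (b : ℂ) (s : ℕ) (k : Fin s → ℕ) (c : Fin s → ℂ) (m : Fin s → ℕ)
    (hm : ∀ i, nxt s m i ≤ m i) (z : ℂ) :
    (∏ i, ((z - b) / (c i - b)) ^ gap s m i / ((m i : ℂ)) ^ k i) =
      (z - b) ^ topv s m * G b s k c m := by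
  have h1 : ∀ i : Fin s,
      ((z - b) / (c i - b)) ^ gap s m i / ((m i : ℂ)) ^ k i =
        (z - b) ^ gap s m i * (((c i - b)⁻¹) ^ gap s m i / ((m i : ℂ)) ^ k i) := by
    intro i
    rw [div_pow, inv_pow]
    ring
  rw [Finset.prod_congr rfl (fun i _ => h1 i), Finset.prod_mul_distrib,
    Finset.prod_pow_eq_pow_sum, sum_gap s m hm]
  rfl

lemma norm_G_le (b : ℂ) (s : ℕ) (k : Fin s → ℕ) (c : Fin s → ℂ) (m : Chains s)
    {R : ℝ} (hR : 0 < R) (hRc : ∀ i, R ≤ ‖c i - b‖) :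
    ‖G b s k c m.1‖ ≤ R⁻¹ ^ topv s m.1 := by
  rw [← sum_gap s m.1 (nxt_le_of_strictAnti m.2.1), G]
  rw [norm_prod, ← Finset.prod_pow_eq_pow_sum]
  apply Finset.prod_le_prod
  · intro i _
    positivity
  · intro i _
    rw [norm_div, norm_pow, norm_pow]
    have hm1 : (1 : ℝ) ≤ ‖(m.1 i : ℂ)‖ ^ k i := by
      rw [Complex.norm_natCast]
      have : (1 : ℝ) ≤ (m.1 i : ℝ) := by
        have := m.2.2 i
        exact_mod_cast this
      exact one_le_pow₀ this
    calc ‖(c i - b)⁻¹‖ ^ gap s m.1 i / ‖(m.1 i : ℂ)‖ ^ k i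
        ≤ ‖(c i - b)⁻¹‖ ^ gap s m.1 i := div_le_self (by positivity) hm1
      _ ≤ R⁻¹ ^ gap s m.1 i := by
          rw [norm_inv]
          apply pow_le_pow_left₀ (by positivity)
          exact inv_anti₀ hR (hRc i)

lemma topv_cons (r : ℕ) (a : ℕ) (f : Fin r → ℕ) : topv (r + 1) (Fin.cons a f) = a := by
  rw [topv, dif_pos (Nat.succ_pos r)]
  have : (⟨0, Nat.succ_pos r⟩ : Fin (r + 1)) = 0 := by ext; simp
  rw [this, Fin.cons_zero]

lemma nxt_cons_zero (r : ℕ) (a : ℕ) (f : Fin r → ℕ) :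
    nxt (r + 1) (Fin.cons a f) 0 = topv r f := by
  unfold nxt topv
  by_cases h : 0 < r
  · rw [dif_pos (show ((0 : Fin (r + 1)) : ℕ) + 1 < r + 1 from by rw [Fin.val_zero]; omega),
      dif_pos h]
    have : (⟨((0 : Fin (r + 1)) : ℕ) + 1, by rw [Fin.val_zero]; omega⟩ : Fin (r + 1)) =
        Fin.succ ⟨0, h⟩ := by ext; simp
    rw [this, Fin.cons_succ]
  · rw [dif_neg (show ¬ (((0 : Fin (r + 1)) : ℕ) + 1 < r + 1) from by rw [Fin.val_zero]; omega),
      dif_neg h]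

lemma nxt_cons_succ (r : ℕ) (a : ℕ) (f : Fin r → ℕ) (i : Fin r) :
    nxt (r + 1) (Fin.cons a f) i.succ = nxt r f i := by
  rw [nxt_succ]
  have : (Fin.cons a f : Fin (r + 1) → ℕ) ∘ Fin.succ = f := funext fun i => by simp [Fin.cons_succ]
  rw [this]

lemma gap_cons_zero (r : ℕ) (a : ℕ) (f : Fin r → ℕ) :
    gap (r + 1) (Fin.cons a f) 0 = a - topv r f := by
  rw [gap, nxt_cons_zero, Fin.cons_zero]

lemma gap_cons_succ (r : ℕ) (a : ℕ) (f : Fin r → ℕ) (i : Fin r) :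
    gap (r + 1) (Fin.cons a f) i.succ = gap r f i := by
  rw [gap, nxt_cons_succ, Fin.cons_succ]
  rfl

lemma topv_tail_lt (r : ℕ) (m : Chains (r + 1)) : topv r (Fin.tail m.1) < m.1 0 := by
  unfold topv
  by_cases h : 0 < r
  · rw [dif_pos h]
    exact m.2.1 (show (0 : Fin (r + 1)) < Fin.succ ⟨0, h⟩ from by
      simp [Fin.lt_def])
  · rw [dif_neg h]
    exact m.2.2 0

def consE (r : ℕ) : ℕ × Chains r ≃ Chains (r + 1) where
  toFun p := ⟨Fin.cons (topv r p.2.1 + p.1 + 1) p.2.1, by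
    rw [Fin.strictAnti_iff_succ_lt]
    rintro ⟨iv, hi⟩
    rw [Fin.cons_succ]
    cases iv with
    | zero =>
        have h1 : Fin.castSucc (⟨0, hi⟩ : Fin r) = (0 : Fin (r + 1)) := by ext; simp
        rw [h1, Fin.cons_zero]
        have h2 : topv r p.2.1 = p.2.1 ⟨0, hi⟩ := by rw [topv, dif_pos hi]
        omega
    | succ l =>
        have h1 : Fin.castSucc (⟨l + 1, hi⟩ : Fin r) = Fin.succ ⟨l, by omega⟩ := by ext; simp
        rw [h1, Fin.cons_succ]
        exact p.2.2.1 (show (⟨l, by omega⟩ : Fin r) < ⟨l + 1, hi⟩ from by simp [Fin.lt_def]), by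
    intro i
    refine Fin.cases ?_ ?_ i
    · rw [Fin.cons_zero]; omega
    · intro j
      rw [Fin.cons_succ]
      exact p.2.2.2 j⟩
  invFun m := (m.1 0 - topv r (Fin.tail m.1) - 1,
    ⟨Fin.tail m.1, fun a b h => m.2.1 (Fin.succ_lt_succ_iff.mpr h), fun i => m.2.2 _⟩)
  left_inv p := by
    have ht : Fin.tail (Fin.cons (topv r p.2.1 + p.1 + 1) p.2.1 : Fin (r+1) → ℕ) = p.2.1 := by
      simp
    refine Prod.ext ?_ ?_
    · show (Fin.cons (topv r p.2.1 + p.1 + 1) p.2.1 : Fin (r+1) → ℕ) 0 -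
          topv r (Fin.tail (Fin.cons (topv r p.2.1 + p.1 + 1) p.2.1 : Fin (r+1) → ℕ)) - 1 = p.1
      rw [Fin.cons_zero, ht]
      omega
    · exact Subtype.ext ht
  right_inv m := by
    apply Subtype.ext
    have ht : topv r (Fin.tail m.1) < m.1 0 := topv_tail_lt r m
    show Fin.cons (topv r (Fin.tail m.1) + (m.1 0 - topv r (Fin.tail m.1) - 1) + 1)
        (Fin.tail m.1) = m.1
    have : topv r (Fin.tail m.1) + (m.1 0 - topv r (Fin.tail m.1) - 1) + 1 = m.1 0 := by
      omega
    rw [this]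
    exact Fin.cons_self_tail m.1

lemma topv_consE (r : ℕ) (p : ℕ × Chains r) :
    topv (r + 1) ((consE r p).1) = topv r p.2.1 + p.1 + 1 :=
  topv_cons _ _ _

lemma G_consE (b : ℂ) (r : ℕ) (k : Fin r → ℕ) (cs : Fin r → ℂ) (c : ℂ) (p : ℕ × Chains r) :
    G b (r + 1) (Fin.cons 1 k) (Fin.cons c cs) ((consE r p).1) =
      ((c - b)⁻¹ ^ (p.1 + 1) / ((topv r p.2.1 + p.1 + 1 : ℕ) : ℂ)) * G b r k cs p.2.1 := by
  have hfst : (consE r p).1 = Fin.cons (topv r p.2.1 + p.1 + 1) p.2.1 := rfl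
  rw [hfst, G, Fin.prod_univ_succ]
  congr 1
  · rw [Fin.cons_zero, Fin.cons_zero, Fin.cons_zero, gap_cons_zero]
    have : topv r p.2.1 + p.1 + 1 - topv r p.2.1 = p.1 + 1 := by omega
    rw [this, pow_one]
  · rw [G]
    refine Finset.prod_congr rfl fun i _ => ?_
    rw [Fin.cons_succ, Fin.cons_succ, Fin.cons_succ, gap_cons_succ]

set_option maxHeartbeats 1000000 in
lemma summable_pi_prod {H : ℕ → ℝ} (h0 : ∀ j, 0 ≤ H j) (hs : Summable H) (s : ℕ) :
    Summable (fun d : Fin s → ℕ => ∏ i, H (d i)) := by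
  induction s with
  | zero =>
    haveI : Finite (Fin 0 → ℕ) := Finite.of_subsingleton
    exact Summable.of_finite
  | succ s ih =>
    rw [← Equiv.summable_iff (Fin.consEquiv (fun _ : Fin (s + 1) => ℕ))]
    have hcomp : ((fun d : Fin (s + 1) → ℕ => ∏ i, H (d i)) ∘
        (Fin.consEquiv (fun _ : Fin (s + 1) => ℕ))) =
        fun p : ℕ × (Fin s → ℕ) => H p.1 * ∏ i, H (p.2 i) := by
      funext p
      show ∏ i, H ((Fin.cons p.1 p.2 : Fin (s + 1) → ℕ) i) = _
      rw [Fin.prod_univ_succ, Fin.cons_zero]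
      simp [Fin.cons_succ]
    have hsum : Summable (fun p : ℕ × (Fin s → ℕ) => H p.1 * ∏ i, H (p.2 i)) := by
      apply Summable.mul_of_nonneg hs ih
      · exact Pi.le_def.mpr fun j => h0 j
      · exact Pi.le_def.mpr fun d => Finset.prod_nonneg fun i _ => h0 _
    exact hsum.congr fun p => (congrFun hcomp p).symm

lemma sum_succ_le_prod (s : ℕ) (d : Fin s → ℕ) :
    (∑ i, (d i + 1)) + 1 ≤ ∏ i, (d i + 2) := by
  induction s with
  | zero => simp
  | succ s ih =>
    rw [Fin.sum_univ_succ, Fin.prod_univ_succ]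
    have hT := ih (fun i => d i.succ)
    have hT1 : 1 ≤ ∏ i : Fin s, (d i.succ + 2) :=
      Finset.one_le_prod' fun i _ => by omega
    set T := ∏ i : Fin s, (d i.succ + 2) with hTdef
    have h2 : (d 0 + 1) * T + T = (d 0 + 2) * T := by ring
    have h3 : d 0 + 1 ≤ (d 0 + 1) * T := Nat.le_mul_of_pos_right _ (by omega)
    omega

def gapE : (s : ℕ) → (Fin s → ℕ) ≃ Chains s
  | 0 =>
    { toFun := fun _ => ⟨fun i => i.elim0, fun a => a.elim0, fun i => i.elim0⟩
      invFun := fun _ => fun i => i.elim0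
      left_inv := fun f => funext fun i => i.elim0
      right_inv := fun m => Subtype.ext (funext fun i => i.elim0) }
  | (s + 1) =>
    ((Fin.consEquiv (fun _ : Fin (s + 1) => ℕ)).symm.trans
      ((Equiv.refl ℕ).prodCongr (gapE s))).trans (consE s)

lemma topv_gapE : ∀ (s : ℕ) (d : Fin s → ℕ), topv s ((gapE s d).1) = ∑ i, (d i + 1) := by
  intro s
  induction s with
  | zero => intro d; simp [topv]
  | succ s ih =>
    intro d
    have hsymm : (Fin.consEquiv (fun _ : Fin (s + 1) => ℕ)).symm d = (d 0, Fin.tail d) := by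
      rw [Equiv.symm_apply_eq]
      exact (Fin.cons_self_tail d).symm
    have h1 : gapE (s + 1) d = consE s
        ((Equiv.refl ℕ).prodCongr (gapE s) ((Fin.consEquiv (fun _ : Fin (s + 1) => ℕ)).symm d)) :=
      rfl
    rw [hsymm] at h1
    rw [h1, topv_consE]
    simp only [Equiv.prodCongr_apply, Equiv.coe_refl, Prod.map_apply, id_eq]
    rw [ih, Fin.sum_univ_succ]
    have : ∀ i : Fin s, Fin.tail d i = d i.succ := fun i => rfl
    simp only [this]
    omega

lemma summable_chains (s : ℕ) {q : ℝ} (hq0 : 0 ≤ q) (hq1 : q < 1) :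
    Summable (fun m : Chains s => ((topv s m.1 + 1 : ℕ) : ℝ) * q ^ topv s m.1) := by
  rw [← Equiv.summable_iff (gapE s)]
  have hcomp : ((fun m : Chains s => ((topv s m.1 + 1 : ℕ) : ℝ) * q ^ topv s m.1) ∘ (gapE s)) =
      fun d : Fin s → ℕ => (((∑ i, (d i + 1)) + 1 : ℕ) : ℝ) * q ^ (∑ i, (d i + 1)) := by
    funext d
    simp only [Function.comp_apply, topv_gapE]
  rw [hcomp]
  have hH : Summable (fun j : ℕ => ((j : ℝ) + 2) * q ^ (j + 1)) := by
    have h1 : Summable (fun j : ℕ => (j : ℝ) ^ 1 * q ^ j) :=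
      summable_pow_mul_geometric_of_norm_lt_one 1 (by rwa [Real.norm_eq_abs, abs_of_nonneg hq0])
    have h2 : Summable (fun j : ℕ => q ^ j) := summable_geometric_of_lt_one hq0 hq1
    have := ((h1.mul_left q).add ((h2.mul_left (2 * q))))
    apply this.congr
    intro j
    ring
  have hHnn : ∀ j : ℕ, 0 ≤ ((j : ℝ) + 2) * q ^ (j + 1) := by
    intro j; positivity
  have hprod := summable_pi_prod hHnn hH s
  apply Summable.of_nonneg_of_le _ _ hprod
  · intro d; positivity
  · intro d
    have hcount : (((∑ i, (d i + 1)) + 1 : ℕ) : ℝ) ≤ ∏ i : Fin s, ((d i : ℝ) + 2) := by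
      have := sum_succ_le_prod s d
      calc (((∑ i, (d i + 1)) + 1 : ℕ) : ℝ) ≤ ((∏ i : Fin s, (d i + 2) : ℕ) : ℝ) := by
            exact_mod_cast this
        _ = ∏ i : Fin s, ((d i : ℝ) + 2) := by push_cast; rfl
    have hsplit : (∏ i : Fin s, ((d i : ℝ) + 2) * q ^ (d i + 1)) =
        (∏ i : Fin s, ((d i : ℝ) + 2)) * q ^ (∑ i, (d i + 1)) := by
      rw [Finset.prod_mul_distrib, Finset.prod_pow_eq_pow_sum]
    rw [hsplit]
    apply mul_le_mul_of_nonneg_right hcount (by positivity)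

end PolyLiAux

/-- The one-variable multiple polylogarithm attached to the base point `b`, exponents
`k : Fin r → ℕ` and letters `c : Fin r → ℂ` (the word
`x_b^{k₁−1} x_{c₁} ⋯ x_b^{k_r−1} x_{c_r}`), including the sign `(−1)^r`:
`Li(z) = (−1)^r Σ_{m₁>⋯>m_r>0} ∏_i ((z−b)/(c_i−b))^{m_i−m_{i+1}} / m_i^{k_i}`
with the convention `m_{r+1} = 0`. -/
noncomputable def polyLi (b : ℂ) (r : ℕ) (k : Fin r → ℕ) (c : Fin r → ℂ) (z : ℂ) : ℂ :=
  (-1 : ℂ) ^ r *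
    ∑' m : {f : Fin r → ℕ // StrictAnti f ∧ ∀ i, 0 < f i},
      ∏ i : Fin r,
        ((z - b) / (c i - b)) ^
            (m.1 i - (if h : (i : ℕ) + 1 < r then m.1 ⟨(i : ℕ) + 1, h⟩ else 0)) /
          ((m.1 i : ℂ)) ^ (k i)

set_option maxHeartbeats 2000000 in
open PolyLiAux in
/-- The differential relation `d/dz Li_b(x_c w; z) = (1/(z−c)) Li_b(w; z)` for a
letter `c ∈ Σ \ {b}` and a word `w ∈ A^b` (encoded by the data `(k, cs)`), valid on
the disc `|z−b| < min_{c'≠b} |c'−b|` minus the point `c`. Prepending the letter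
`x_c` to `w` corresponds to the data `(Fin.cons 1 k, Fin.cons c cs)`. -/
theorem polyLi_hasDerivAt (S : Finset ℂ) (b : ℂ) (hb : b ∈ S)
    (r : ℕ) (k : Fin r → ℕ) (hk : ∀ i, 0 < k i)
    (cs : Fin r → ℂ) (hcsS : ∀ i, cs i ∈ S) (hcsb : ∀ i, cs i ≠ b)
    (c : ℂ) (hcS : c ∈ S) (hcb : c ≠ b) (z : ℂ)
    (hz : ∀ c' ∈ S, c' ≠ b → ‖z - b‖ < ‖c' - b‖)
    (hzc : z ≠ c) :
    HasDerivAt (polyLi b (r + 1) (Fin.cons 1 k) (Fin.cons c cs))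
      ((z - c)⁻¹ * polyLi b r k cs z) z := by
  classical
  set kk : Fin (r + 1) → ℕ := Fin.cons 1 k with hkk
  set ccs : Fin (r + 1) → ℂ := Fin.cons c cs with hccs
  set A : Finset ℂ := insert c (Finset.image cs Finset.univ) with hA
  have hAne : A.Nonempty := ⟨c, Finset.mem_insert_self _ _⟩
  set R : ℝ := A.inf' hAne (fun a => ‖a - b‖) with hRdef
  have hzR : ‖z - b‖ < R := by
    rw [hRdef, Finset.lt_inf'_iff]
    intro a ha
    rw [hA, Finset.mem_insert] at ha
    rcases ha with rfl | ha
    · exact hz a hcS hcb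
    · obtain ⟨i, -, rfl⟩ := Finset.mem_image.mp ha
      exact hz (cs i) (hcsS i) (hcsb i)
  have hRc : R ≤ ‖c - b‖ :=
    Finset.inf'_le _ (Finset.mem_insert_self _ _)
  have hRcs : ∀ i, R ≤ ‖cs i - b‖ := fun i =>
    Finset.inf'_le _ (Finset.mem_insert_of_mem (Finset.mem_image_of_mem _ (Finset.mem_univ i)))
  have hR0 : 0 < R := lt_of_le_of_lt (norm_nonneg _) hzR
  set ρ : ℝ := (‖z - b‖ + R) / 2 with hρdef
  have habs0 : 0 ≤ ‖z - b‖ := norm_nonneg _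
  have hρ0 : 0 < ρ := by rw [hρdef]; linarith
  have hzρ : ‖z - b‖ < ρ := by rw [hρdef]; linarith
  have hρR : ρ < R := by rw [hρdef]; linarith
  set q : ℝ := ρ / R with hqdef
  have hq0 : 0 ≤ q := le_of_lt (div_pos hρ0 hR0)
  have hq1 : q < 1 := (div_lt_one hR0).mpr hρR
  have hRccs : ∀ i : Fin (r + 1), R ≤ ‖ccs i - b‖ := by
    intro i
    refine Fin.cases ?_ ?_ i
    · rw [hccs, Fin.cons_zero]; exact hRc
    · intro j; rw [hccs, Fin.cons_succ]; exact hRcs j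
  -- the summands and their derivatives
  set f : Chains (r + 1) → ℂ → ℂ := fun m y =>
    ∏ i, ((y - b) / (ccs i - b)) ^ gap (r + 1) m.1 i / ((m.1 i : ℂ)) ^ kk i with hfdef
  set f' : Chains (r + 1) → ℂ → ℂ := fun m y =>
    G b (r + 1) kk ccs m.1 *
      (((topv (r + 1) m.1 : ℕ) : ℂ) * (y - b) ^ (topv (r + 1) m.1 - 1)) with hf'def
  set u : Chains (r + 1) → ℝ := fun m =>
    ρ⁻¹ * (((topv (r + 1) m.1 + 1 : ℕ) : ℝ) * q ^ topv (r + 1) m.1) with hudef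
  have hu : Summable u := by
    rw [hudef]
    exact (summable_chains (r + 1) hq0 hq1).mul_left ρ⁻¹
  have hfactor : ∀ (m : Chains (r + 1)) (y : ℂ),
      f m y = (y - b) ^ topv (r + 1) m.1 * G b (r + 1) kk ccs m.1 := fun m y =>
    term_eq b (r + 1) kk ccs m.1 (nxt_le_of_strictAnti m.2.1) y
  have hfderiv : ∀ (m : Chains (r + 1)) (y : ℂ), HasDerivAt (f m) (f' m y) y := by
    intro m y
    have h1 : f m = fun y => (y - b) ^ topv (r + 1) m.1 * G b (r + 1) kk ccs m.1 :=
      funext fun y => hfactor m y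
    rw [h1, hf'def]
    have h2 := (((hasDerivAt_id y).sub_const b).pow (topv (r + 1) m.1)).mul_const
      (G b (r + 1) kk ccs m.1)
    refine h2.congr_deriv ?_
    simp only [id_eq]
    ring
  have htop1 : ∀ m : Chains (r + 1), 1 ≤ topv (r + 1) m.1 := by
    intro m
    have h := m.2.2 ⟨0, Nat.succ_pos r⟩
    unfold topv
    rw [dif_pos (Nat.succ_pos r)]
    omega
  have hqpow : ∀ n : ℕ, q ^ n = ρ ^ n * (R⁻¹) ^ n := by
    intro n
    rw [hqdef, div_eq_mul_inv, mul_pow]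
  have hbound : ∀ (m : Chains (r + 1)) (y : ℂ), y ∈ Metric.ball b ρ → ‖f' m y‖ ≤ u m := by
    intro m y hy
    set n := topv (r + 1) m.1 with hn
    have hn1 : 1 ≤ n := htop1 m
    have hyb : ‖y - b‖ ≤ ρ := by
      rw [Metric.mem_ball, Complex.dist_eq] at hy
      exact hy.le
    have hb1 : ‖f' m y‖ =
        ‖G b (r + 1) kk ccs m.1‖ * ((n : ℝ) * ‖y - b‖ ^ (n - 1)) := by
      rw [hf'def]
      simp [norm_mul, norm_pow, Complex.norm_natCast, hn]
    rw [hb1]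
    have hGle := norm_G_le b (r + 1) kk ccs m hR0 hRccs
    have hyble : ‖y - b‖ ^ (n - 1) ≤ ρ ^ (n - 1) :=
      pow_le_pow_left₀ (norm_nonneg _) hyb _
    have hstep1 : ‖G b (r + 1) kk ccs m.1‖ * ((n : ℝ) * ‖y - b‖ ^ (n - 1)) ≤
        R⁻¹ ^ n * ((n : ℝ) * ρ ^ (n - 1)) := by
      apply mul_le_mul hGle _ (by positivity) (by positivity)
      exact mul_le_mul_of_nonneg_left hyble (by positivity)
    have hum : u m = ((n + 1 : ℕ) : ℝ) * (ρ ^ (n - 1) * R⁻¹ ^ n) := by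
      rw [hudef]
      show ρ⁻¹ * (((n + 1 : ℕ) : ℝ) * q ^ n) = _
      rw [hqpow n]
      have hρn : ρ ^ n = ρ * ρ ^ (n - 1) := by
        conv_lhs => rw [show n = (n - 1) + 1 from by omega]
        rw [pow_succ']
      rw [hρn]
      field_simp
      try ring
    refine hstep1.trans ?_
    rw [hum]
    have h1 : R⁻¹ ^ n * ((n : ℝ) * ρ ^ (n - 1)) = (n : ℝ) * (ρ ^ (n - 1) * R⁻¹ ^ n) := by ring
    rw [h1]
    apply mul_le_mul_of_nonneg_right _ (by positivity)
    push_cast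
    linarith
  have hball : z ∈ Metric.ball b ρ := by
    rw [Metric.mem_ball, Complex.dist_eq]
    exact hzρ
  have hg0 : Summable (fun m : Chains (r + 1) => f m z) := by
    apply Summable.of_norm
    apply Summable.of_nonneg_of_le (fun m => norm_nonneg _) _
      (summable_chains (r + 1) hq0 hq1)
    intro m
    rw [hfactor m z, norm_mul, norm_pow]
    calc ‖z - b‖ ^ topv (r + 1) m.1 * ‖G b (r + 1) kk ccs m.1‖
        ≤ ρ ^ topv (r + 1) m.1 * R⁻¹ ^ topv (r + 1) m.1 := by
          apply mul_le_mul (pow_le_pow_left₀ habs0 hzρ.le _)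
            (norm_G_le b (r + 1) kk ccs m hR0 hRccs) (norm_nonneg _) (by positivity)
      _ = q ^ topv (r + 1) m.1 := (hqpow _).symm
      _ ≤ ((topv (r + 1) m.1 + 1 : ℕ) : ℝ) * q ^ topv (r + 1) m.1 := by
          apply le_mul_of_one_le_left (by positivity)
          push_cast
          linarith
  have HD : HasDerivAt (fun y => ∑' m : Chains (r + 1), f m y)
      (∑' m : Chains (r + 1), f' m z) z :=
    hasDerivAt_tsum_of_isPreconnected hu Metric.isOpen_ball
      (convex_ball b ρ).isPreconnected (fun m y _ => hfderiv m y) hbound hball hg0 hball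
  have hpoly_fun : polyLi b (r + 1) kk ccs = fun y =>
      (-1 : ℂ) ^ (r + 1) * ∑' m : Chains (r + 1), f m y := by
    funext y
    rw [polyLi]
    congr 1
  -- now identify the derivative value
  have hsum_f' : Summable (fun m : Chains (r + 1) => f' m z) := by
    apply Summable.of_norm
    apply Summable.of_nonneg_of_le (fun m => norm_nonneg _) _ hu
    intro m
    exact hbound m z hball
  set x : ℂ := (z - b) * (c - b)⁻¹ with hxdef
  have hcb0 : (c - b) ≠ 0 := sub_ne_zero.mpr hcb
  have hxlt : ‖x‖ < 1 := by
    rw [hxdef, norm_mul, norm_inv]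
    rw [← div_eq_mul_inv]
    rw [div_lt_one (lt_of_lt_of_le (lt_of_le_of_lt habs0 hzR) hRc)]
    exact hz c hcS hcb
  set W : ℂ := ∑' m : Chains r, (z - b) ^ topv r m.1 * G b r k cs m.1 with hWdef
  have hf'val : ∀ (j : ℕ) (m : Chains r), f' (consE r (j, m)) z =
      ((c - b)⁻¹ * x ^ j) * ((z - b) ^ topv r m.1 * G b r k cs m.1) := by
    intro j m
    have hGv := G_consE b r k cs c (j, m)
    have htv := topv_consE r (j, m)
    rw [hf'def]
    show G b (r + 1) kk ccs ((consE r (j, m)).1) *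
        (((topv (r + 1) ((consE r (j, m)).1) : ℕ) : ℂ) *
          (z - b) ^ (topv (r + 1) ((consE r (j, m)).1) - 1)) = _
    dsimp only at hGv htv
    rw [hGv, htv]
    have hne : ((topv r m.1 + j + 1 : ℕ) : ℂ) ≠ 0 := Nat.cast_ne_zero.mpr (by omega)
    have hexp : topv r m.1 + j + 1 - 1 = topv r m.1 + j := by omega
    rw [hexp]
    have key : (c - b)⁻¹ ^ (j + 1) / ((topv r m.1 + j + 1 : ℕ) : ℂ) * G b r k cs m.1 *
        (((topv r m.1 + j + 1 : ℕ) : ℂ) * (z - b) ^ (topv r m.1 + j)) =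
        (c - b)⁻¹ ^ (j + 1) * G b r k cs m.1 * (z - b) ^ (topv r m.1 + j) *
          (((topv r m.1 + j + 1 : ℕ) : ℂ) / ((topv r m.1 + j + 1 : ℕ) : ℂ)) := by
      ring
    rw [key, div_self hne, mul_one, hxdef, pow_add, mul_pow, pow_succ]
    ring
  have hgeo : ∑' j : ℕ, x ^ j = (1 - x)⁻¹ := tsum_geometric_of_norm_lt_one hxlt
  have hsum_p : Summable (fun p : ℕ × Chains r => f' (consE r p) z) :=
    (Equiv.summable_iff (consE r)).mpr hsum_f'
  have ht1 : ∑' m : Chains (r + 1), f' m z = ∑' p : ℕ × Chains r, f' (consE r p) z :=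
    (Equiv.tsum_eq (consE r) (fun m => f' m z)).symm
  have ht2 : ∑' p : ℕ × Chains r, f' (consE r p) z =
      ∑' j : ℕ, ∑' m : Chains r, f' (consE r (j, m)) z := Summable.tsum_prod hsum_p
  have ht3 : ∀ j : ℕ, ∑' m : Chains r, f' (consE r (j, m)) z =
      ((c - b)⁻¹ * W) * x ^ j := by
    intro j
    calc ∑' m : Chains r, f' (consE r (j, m)) z
        = ∑' m : Chains r, ((c - b)⁻¹ * x ^ j) *
            ((z - b) ^ topv r m.1 * G b r k cs m.1) := tsum_congr fun m => hf'val j m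
      _ = ((c - b)⁻¹ * x ^ j) * W := by rw [tsum_mul_left, hWdef]
      _ = ((c - b)⁻¹ * W) * x ^ j := by ring
  have ht4 : ∑' m : Chains (r + 1), f' m z = ((c - b)⁻¹ * W) * (1 - x)⁻¹ := by
    rw [ht1, ht2]
    rw [tsum_congr ht3, tsum_mul_left, hgeo]
  have hWpoly : polyLi b r k cs z = (-1 : ℂ) ^ r * W := by
    rw [polyLi, hWdef]
    congr 1
    exact tsum_congr fun m => term_eq b r k cs m.1 (nxt_le_of_strictAnti m.2.1) z
  have hcz : (c - b) * (1 - x) = c - z := by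
    rw [hxdef]
    field_simp
    ring
  have hfinal : (-1 : ℂ) ^ (r + 1) * (((c - b)⁻¹ * W) * (1 - x)⁻¹) =
      (z - c)⁻¹ * polyLi b r k cs z := by
    rw [hWpoly]
    have hinv : (c - b)⁻¹ * (1 - x)⁻¹ = (c - z)⁻¹ := by
      rw [← mul_inv, hcz]
    have hcz2 : (c - z)⁻¹ = -(z - c)⁻¹ := by
      rw [show c - z = -(z - c) from by ring, inv_neg]
    calc (-1 : ℂ) ^ (r + 1) * (((c - b)⁻¹ * W) * (1 - x)⁻¹)
        = ((c - b)⁻¹ * (1 - x)⁻¹) * ((-1 : ℂ) ^ (r + 1) * W) := by ring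
      _ = (c - z)⁻¹ * ((-1 : ℂ) ^ (r + 1) * W) := by rw [hinv]
      _ = (z - c)⁻¹ * ((-1 : ℂ) ^ r * W) := by
          rw [hcz2, pow_succ]
          ring
  have HD2 : HasDerivAt (polyLi b (r + 1) kk ccs)
      ((-1 : ℂ) ^ (r + 1) * ∑' m : Chains (r + 1), f' m z) z := by
    rw [hpoly_fun]
    exact HD.const_mul _
  rw [ht4] at HD2
  rw [← hfinal]
  exact HD2
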